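/- Let X ∈ ℝ^{m×n}, Y ∈ ℝ^{n×n}, E ∈ ℝ^{n×n} and s > 0 satisfy YᵀY = XᵀX + s·I + E with ‖E‖₂ ≤ 0.1·s. Then Y is invertible and ‖X·Y⁻¹‖₂ ≤ 1.5. -/

import Mathlib

open Matrix Finset

noncomputable def specNorm {m n : ℕ} (A : Matrix (Fin m) (Fin n) ℝ) : ℝ :=
  ‖(Matrix.toEuclideanLin A).toContinuousLinearMap‖

noncomputable def frobNorm {m n : ℕ} (A : Matrix (Fin m) (Fin n) ℝ) : ℝ :=
  Real.sqrt (∑ i, ∑ j, (A i j) ^ 2)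

noncomputable def gNorm {m n : ℕ} (A : Matrix (Fin m) (Fin n) ℝ) : ℝ :=
  ⨆ j : Fin n, Real.sqrt (∑ i, (A i j) ^ 2)

noncomputable def sigmaMin {m n : ℕ} (A : Matrix (Fin m) (Fin n) ℝ) : ℝ :=
  ⨅ x : Metric.sphere (0 : EuclideanSpace ℝ (Fin n)) 1,
    ‖(Matrix.toEuclideanLin A) (x : EuclideanSpace ℝ (Fin n))‖

noncomputable def condNum {m n : ℕ} (A : Matrix (Fin m) (Fin n) ℝ) : ℝ :=
  specNorm A / sigmaMin A

def IsT1Sparse {m n : ℕ} (X : Matrix (Fin m) (Fin n) ℝ) (v t₁ t₂ : ℕ) (c : ℝ) : Prop :=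
  ∃ S : Finset (Fin n), S.card = v ∧
    (∀ j ∈ S, Set.ncard {i | X i j ≠ 0} ≤ t₁) ∧
    (∀ j ∉ S, Set.ncard {i | X i j ≠ 0} ≤ t₂) ∧
    ∀ i j, |X i j| ≤ c


lemma transpose_eq_conjTranspose' {m n : ℕ} (A : Matrix (Fin m) (Fin n) ℝ) : Aᵀ = Aᴴ := by
  ext i j; simp [Matrix.conjTranspose_apply]

lemma normsq_toEuclideanLin {m n : ℕ} (A : Matrix (Fin m) (Fin n) ℝ)
    (v : EuclideanSpace ℝ (Fin n)) :
    ‖toEuclideanLin A v‖ ^ 2 = inner ℝ v (toEuclideanLin (Aᵀ * A) v) := by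
  have h : toEuclideanLin (Aᵀ * A) v = toEuclideanLin Aᵀ (toEuclideanLin A v) := by
    simp [Matrix.toEuclideanLin_apply, Matrix.mulVec_mulVec]
  rw [h, transpose_eq_conjTranspose', Matrix.toEuclideanLin_conjTranspose_eq_adjoint,
    LinearMap.adjoint_inner_right, real_inner_self_eq_norm_sq]

lemma key_identity {m n : ℕ} (X : Matrix (Fin m) (Fin n) ℝ) (Y E : Matrix (Fin n) (Fin n) ℝ)
    (s : ℝ)
    (hGram : Yᵀ * Y = Xᵀ * X + s • (1 : Matrix (Fin n) (Fin n) ℝ) + E)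
    (v : EuclideanSpace ℝ (Fin n)) :
    ‖toEuclideanLin Y v‖ ^ 2
      = ‖toEuclideanLin X v‖ ^ 2 + s * ‖v‖ ^ 2 + inner ℝ v (toEuclideanLin E v) := by
  rw [normsq_toEuclideanLin, hGram, normsq_toEuclideanLin]
  have h1 : toEuclideanLin (Xᵀ * X + s • (1 : Matrix (Fin n) (Fin n) ℝ) + E) v
      = toEuclideanLin (Xᵀ * X) v + s • v + toEuclideanLin E v := by
    simp [Matrix.toEuclideanLin_apply, Matrix.add_mulVec, Matrix.smul_mulVec]
    try rfl
  rw [h1, inner_add_right, inner_add_right, inner_smul_right, real_inner_self_eq_norm_sq]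
  try ring

lemma inner_E_bound {n : ℕ} (E : Matrix (Fin n) (Fin n) ℝ) (v : EuclideanSpace ℝ (Fin n)) :
    |(inner ℝ v (toEuclideanLin E v) : ℝ)|
      ≤ ‖(Matrix.toEuclideanLin E).toContinuousLinearMap‖ * ‖v‖ ^ 2 := by
  calc |(inner ℝ v (toEuclideanLin E v) : ℝ)| ≤ ‖v‖ * ‖toEuclideanLin E v‖ :=
        abs_real_inner_le_norm _ _
    _ ≤ ‖v‖ * (‖(Matrix.toEuclideanLin E).toContinuousLinearMap‖ * ‖v‖) := by
        gcongr
        exact ((Matrix.toEuclideanLin E).toContinuousLinearMap).le_opNorm v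
    _ = ‖(Matrix.toEuclideanLin E).toContinuousLinearMap‖ * ‖v‖ ^ 2 := by ring

theorem stmt10' {m n : ℕ} (X : Matrix (Fin m) (Fin n) ℝ) (Y E : Matrix (Fin n) (Fin n) ℝ)
    (s : ℝ) (hs : 0 < s)
    (hGram : Yᵀ * Y = Xᵀ * X + s • (1 : Matrix (Fin n) (Fin n) ℝ) + E)
    (hE : ‖(Matrix.toEuclideanLin E).toContinuousLinearMap‖ ≤ 0.1 * s) :
    IsUnit Y ∧ ‖(Matrix.toEuclideanLin (X * Y⁻¹)).toContinuousLinearMap‖ ≤ 1.5 := by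
  have hEb : ∀ v : EuclideanSpace ℝ (Fin n),
      |(inner ℝ v (toEuclideanLin E v) : ℝ)| ≤ 0.1 * s * ‖v‖ ^ 2 := by
    intro v
    calc |(inner ℝ v (toEuclideanLin E v) : ℝ)|
        ≤ ‖(Matrix.toEuclideanLin E).toContinuousLinearMap‖ * ‖v‖ ^ 2 := inner_E_bound E v
      _ ≤ 0.1 * s * ‖v‖ ^ 2 := by
          have := sq_nonneg ‖v‖; nlinarith
  have key := key_identity X Y E s hGram
  -- injectivity of Y
  have hzero : ∀ v : Fin n → ℝ, Y *ᵥ v = 0 → v = 0 := by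
    intro v hv
    have hv' : toEuclideanLin Y ((WithLp.equiv 2 (Fin n → ℝ)).symm v) = 0 := by
      rw [Matrix.toEuclideanLin_apply]
      simp [hv]
    set w : EuclideanSpace ℝ (Fin n) := (WithLp.equiv 2 (Fin n → ℝ)).symm v with hw
    have h1 := key w
    rw [hv'] at h1
    simp only [norm_zero] at h1
    have h2 := hEb w
    have hsb : s * ‖w‖ ^ 2 ≤ 0 := by
      nlinarith [sq_nonneg ‖toEuclideanLin X w‖, (abs_le.mp h2).1]
    have hsb' : s * ‖w‖ ^ 2 = 0 :=
      le_antisymm hsb (mul_nonneg hs.le (sq_nonneg _))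
    have h3 : ‖w‖ ^ 2 = 0 := by
      rcases mul_eq_zero.mp hsb' with h | h
      · exact absurd h hs.ne'
      · exact h
    have h4 : w = 0 := by
      have := pow_eq_zero_iff (n := 2) (by norm_num) |>.mp h3
      simpa [norm_eq_zero] using this
    have : v = 0 := by
      have := congrArg (WithLp.equiv 2 (Fin n → ℝ)) h4
      rw [hw] at this; simpa using this
    exact this
  have hinj : Function.Injective (Y.mulVec) := by
    intro a b hab
    have h := hzero (a - b) (by rw [Matrix.mulVec_sub, hab, sub_self])
    exact sub_eq_zero.mp h
  have hY : IsUnit Y := Matrix.mulVec_injective_iff_isUnit.mp hinj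
  refine ⟨hY, ?_⟩
  -- bound operator norm
  have hYY : Y * Y⁻¹ = 1 := Matrix.mul_nonsing_inv Y (Matrix.isUnit_iff_isUnit_det Y |>.mp hY)
  apply ContinuousLinearMap.opNorm_le_bound _ (by norm_num)
  intro w
  set v : EuclideanSpace ℝ (Fin n) := toEuclideanLin Y⁻¹ w with hv
  have hXv : toEuclideanLin (X * Y⁻¹) w = toEuclideanLin X v := by
    simp [hv, Matrix.toEuclideanLin_apply, Matrix.mulVec_mulVec]
  have hYv : toEuclideanLin Y v = w := by
    simp only [hv, Matrix.toEuclideanLin_apply, Equiv.apply_symm_apply,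
      Matrix.mulVec_mulVec, hYY, Matrix.one_mulVec, Equiv.symm_apply_apply]
  have h1 := key v
  rw [hYv] at h1
  have h2 := hEb v
  have hnormle : ‖toEuclideanLin X v‖ ^ 2 ≤ ‖w‖ ^ 2 := by
    nlinarith [sq_nonneg ‖v‖, mul_nonneg hs.le (sq_nonneg ‖v‖), (abs_le.mp h2).1]
  have : ‖toEuclideanLin X v‖ ≤ ‖w‖ := by
    nlinarith [norm_nonneg (toEuclideanLin X v), norm_nonneg w]
  calc ‖(Matrix.toEuclideanLin (X * Y⁻¹)).toContinuousLinearMap w‖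
      = ‖toEuclideanLin (X * Y⁻¹) w‖ := rfl
    _ = ‖toEuclideanLin X v‖ := by rw [hXv]
    _ ≤ ‖w‖ := this
    _ ≤ 1.5 * ‖w‖ := by nlinarith [norm_nonneg w]


/-- Y is invertible and ‖X·Y⁻¹‖₂ ≤ 1.5. -/
theorem stmt10 {m n : ℕ} (X : Matrix (Fin m) (Fin n) ℝ) (Y E : Matrix (Fin n) (Fin n) ℝ)
    (s : ℝ) (hs : 0 < s)
    (hGram : Yᵀ * Y = Xᵀ * X + s • (1 : Matrix (Fin n) (Fin n) ℝ) + E)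
    (hE : specNorm E ≤ 0.1 * s) :
    IsUnit Y ∧ specNorm (X * Y⁻¹) ≤ 1.5 := by
  exact stmt10' X Y E s hs hGram hE
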